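/- Let p be a prime, θ, q ∈ ℚ_p with 0 < |θ−1|_p < |q|_p < 1, and f(x) = ((θx + q − 1)/(x + θ + q − 2))³. For every x ∈ ℚ_p with |x−1|_p < |q|_p, one has |f(x) − 1|_p ≤ (|θ−1|_p/|q|_p)·|x−1|_p. In particular the open ball {x : |x−1|_p < |q|_p} is mapped into itself, and all its points converge to the fixed point 1 under iteration of f. -/

import Mathlib

/-- On the ball `‖x - 1‖ < ‖q‖` the Potts–Bethe mapping contracts towards the
fixed point `1`: `‖f x - 1‖ ≤ (‖θ-1‖/‖q‖)·‖x - 1‖`; in particular the ball is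
mapped into itself and all its points converge to `1` under iteration. -/
theorem pottsBethe_contracts_on_A0 (p : ℕ) [Fact p.Prime]
    (θ q : ℚ_[p]) (h1 : 0 < ‖θ - 1‖) (h2 : ‖θ - 1‖ < ‖q‖) (h3 : ‖q‖ < 1) :
    ∀ x : ℚ_[p], ‖x - 1‖ < ‖q‖ →
      ‖((θ * x + q - 1) / (x + θ + q - 2)) ^ 3 - 1‖ ≤ ‖θ - 1‖ / ‖q‖ * ‖x - 1‖ ∧
      ‖((θ * x + q - 1) / (x + θ + q - 2)) ^ 3 - 1‖ < ‖q‖ ∧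
      Filter.Tendsto
        (fun n => (fun y : ℚ_[p] => ((θ * y + q - 1) / (y + θ + q - 2)) ^ 3)^[n] x)
        Filter.atTop (nhds 1) := by
  have hq0 : (0:ℝ) < ‖q‖ := lt_trans h1 h2
  have hqne : ‖q‖ ≠ 0 := ne_of_gt hq0
  set r : ℝ := ‖θ - 1‖ / ‖q‖ with hrdef
  have hr0 : 0 ≤ r := div_nonneg (norm_nonneg _) hq0.le
  have hr1 : r < 1 := (div_lt_one hq0).2 h2
  have hθ : ‖θ‖ ≤ 1 := by
    have : θ = 1 + (θ - 1) := by ring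
    rw [this]
    refine le_trans (Padic.nonarchimedean _ _) ?_
    simp only [norm_one]
    exact max_le le_rfl (le_of_lt (lt_trans h2 h3))
  -- the key contraction step
  have step : ∀ x : ℚ_[p], ‖x - 1‖ < ‖q‖ →
      ‖((θ * x + q - 1) / (x + θ + q - 2)) ^ 3 - 1‖ ≤ r * ‖x - 1‖ := by
    intro x hx
    set N : ℚ_[p] := θ * x + q - 1 with hNdef
    set D : ℚ_[p] := x + θ + q - 2 with hDdef
    have hDnorm : ‖D‖ = ‖q‖ := by
      have heq : D = q + ((x - 1) + (θ - 1)) := by rw [hDdef]; ring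
      have hs : ‖(x - 1) + (θ - 1)‖ < ‖q‖ :=
        lt_of_le_of_lt (Padic.nonarchimedean _ _) (max_lt hx h2)
      rw [heq, Padic.add_eq_max_of_ne (ne_of_gt hs), max_eq_left hs.le]
    have hD0 : D ≠ 0 := by
      intro h
      rw [h, norm_zero] at hDnorm
      exact hqne hDnorm.symm
    have hNle : ‖N‖ ≤ ‖q‖ := by
      have heq : N = q + (θ * (x - 1) + (θ - 1)) := by rw [hNdef]; ring
      have hs : ‖θ * (x - 1) + (θ - 1)‖ ≤ ‖q‖ := by
        refine le_trans (Padic.nonarchimedean _ _) (max_le ?_ h2.le)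
        rw [norm_mul]
        calc ‖θ‖ * ‖x - 1‖ ≤ 1 * ‖x - 1‖ := by gcongr
          _ = ‖x - 1‖ := one_mul _
          _ ≤ ‖q‖ := hx.le
      rw [heq]
      exact le_trans (Padic.nonarchimedean _ _) (max_le le_rfl hs)
    have key : (N / D) ^ 3 - 1 = ((θ - 1) * (x - 1)) * (N ^ 2 + N * D + D ^ 2) / D ^ 3 := by
      have hD0' : x + θ + q - 2 ≠ 0 := hD0
      rw [hNdef, hDdef]
      rw [div_pow, div_sub_one (pow_ne_zero 3 hD0')]
      congr 1
      ring
    have hg : ‖N ^ 2 + N * D + D ^ 2‖ ≤ ‖q‖ ^ 2 := by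
      have hN2 : ‖N ^ 2‖ ≤ ‖q‖ ^ 2 := by
        rw [norm_pow]; exact pow_le_pow_left₀ (norm_nonneg _) hNle 2
      have hND : ‖N * D‖ ≤ ‖q‖ ^ 2 := by
        rw [norm_mul, hDnorm, sq]
        exact mul_le_mul_of_nonneg_right hNle hq0.le
      have hD2 : ‖D ^ 2‖ ≤ ‖q‖ ^ 2 := by rw [norm_pow, hDnorm]
      calc ‖N ^ 2 + N * D + D ^ 2‖ ≤ max ‖N ^ 2 + N * D‖ ‖D ^ 2‖ :=
            Padic.nonarchimedean _ _
        _ ≤ max (max ‖N ^ 2‖ ‖N * D‖) ‖D ^ 2‖ := by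
            exact max_le_max (Padic.nonarchimedean _ _) le_rfl
        _ ≤ ‖q‖ ^ 2 := max_le (max_le hN2 hND) hD2
    rw [key, norm_div, norm_mul, norm_mul, norm_pow, hDnorm]
    calc ‖θ - 1‖ * ‖x - 1‖ * ‖N ^ 2 + N * D + D ^ 2‖ / ‖q‖ ^ 3
        ≤ ‖θ - 1‖ * ‖x - 1‖ * ‖q‖ ^ 2 / ‖q‖ ^ 3 := by gcongr
      _ = r * ‖x - 1‖ := by rw [hrdef]; field_simp
  intro x hx
  have hle := step x hx
  have hshrink : ∀ y : ℚ_[p], ‖y - 1‖ < ‖q‖ →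
      ‖((θ * y + q - 1) / (y + θ + q - 2)) ^ 3 - 1‖ < ‖q‖ := by
    intro y hy
    exact lt_of_le_of_lt (le_trans (step y hy)
      (mul_le_of_le_one_left (norm_nonneg _) hr1.le)) hy
  refine ⟨hle, hshrink x hx, ?_⟩
  set F : ℚ_[p] → ℚ_[p] := fun y => ((θ * y + q - 1) / (y + θ + q - 2)) ^ 3 with hF
  have iter : ∀ n : ℕ, ‖(F^[n]) x - 1‖ < ‖q‖ ∧ ‖(F^[n]) x - 1‖ ≤ r ^ n * ‖x - 1‖ := by
    intro n
    induction n with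
    | zero => simpa using hx
    | succ n ih =>
      rw [Function.iterate_succ_apply']
      refine ⟨hshrink _ ih.1, ?_⟩
      calc ‖F (F^[n] x) - 1‖ ≤ r * ‖F^[n] x - 1‖ := step _ ih.1
        _ ≤ r * (r ^ n * ‖x - 1‖) := mul_le_mul_of_nonneg_left ih.2 hr0
        _ = r ^ (n + 1) * ‖x - 1‖ := by ring
  have htend : Filter.Tendsto (fun n : ℕ => r ^ n * ‖x - 1‖) Filter.atTop (nhds 0) := by
    simpa using (tendsto_pow_atTop_nhds_zero_of_lt_one hr0 hr1).mul_const ‖x - 1‖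
  have : Filter.Tendsto (fun n : ℕ => ‖(F^[n]) x - 1‖) Filter.atTop (nhds 0) :=
    squeeze_zero (fun n => norm_nonneg _) (fun n => (iter n).2) htend
  exact tendsto_iff_norm_sub_tendsto_zero.mpr this
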